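/- For every e ≥ 1, the map x ↦ x(3x-1)/2 induces a bijection on ℤ/3^eℤ (where division by 2 denotes multiplication by the inverse of 2 modulo 3^e). -/

import Mathlib

theorem pentagonal_map_bijective_mod_three_pow (e : ℕ) (he : 1 ≤ e) :
    Function.Bijective (fun x : ZMod (3 ^ e) => x * (3 * x - 1) * (2 : ZMod (3 ^ e))⁻¹) := by
  have hpos : NeZero (3 ^ e) := ⟨pow_ne_zero e (by norm_num)⟩
  have h3 : (3 : ZMod (3 ^ e)) ^ e = 0 := by
    have : ((3 ^ e : ℕ) : ZMod (3 ^ e)) = 0 := ZMod.natCast_self _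
    push_cast at this
    exact this
  have hnil : ∀ z : ZMod (3 ^ e), IsNilpotent (3 * z) := by
    intro z
    exact ⟨e, by rw [mul_pow, h3, zero_mul]⟩
  have h2 : IsUnit (2 : ZMod (3 ^ e)) := by
    have := ZMod.isUnit_iff_coprime 2 (3 ^ e)
    simp only [Nat.cast_ofNat] at this
    rw [this]
    exact Nat.Coprime.pow_right e (by norm_num)
  have h2inv : IsUnit (2 : ZMod (3 ^ e))⁻¹ :=
    IsUnit.of_mul_eq_one _ (ZMod.inv_mul_of_unit _ h2)
  rw [Finite.injective_iff_bijective.symm]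
  intro x y hxy
  simp only at hxy
  have h1 : x * (3 * x - 1) = y * (3 * y - 1) := by
    exact h2inv.mul_left_cancel (by linear_combination hxy)
  have h0 : (x - y) * (3 * (x + y) - 1) = 0 := by linear_combination h1
  have hu : IsUnit (3 * (x + y) - 1) := (hnil (x + y)).isUnit_sub_one
  have : x - y = 0 := hu.mul_right_cancel (by rw [h0, zero_mul])
  exact sub_eq_zero.mp this
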